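/- In the inductive construction for the k-wise Ramsey theorem: if for every a ∈ ℕ and every infinite A ⊆ ℕ with a < min A there exists an infinite (k−1)-wise monochromatic subset of A for the shifted colorings col'_i(S) = col_{i+1}(S ∪ {a}), then there exists an infinite sequence a_0 < a_1 < ... and a color vector C ∈ (colors)^k such that for every i ∈ [k] and every i-element subset S of {a_0, a_1, ...}, col_i(S) = C_i on an infinite subsequence; in particular some infinite subset of {a_0, a_1, ...} is k-wise monochromatic. -/

import Mathlib

/-- The inductive step of the k-wise Ramsey construction: if for every `a` and every
infinite `A` with `a < min A` there is an infinite subset of `A` monochromatic for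
all shifted colorings `S ↦ col (i+1) (insert a S)`, then there is an infinite strictly
increasing sequence `a`, a color vector `C`, and an infinite subset `X` of the range of
`a` on which `col i` is constantly `C i` on `(i+1)`-element subsets, for all `i < k`;
in particular `X` is k-wise monochromatic. -/
theorem stmt19 (k : ℕ) (col : ℕ → Finset ℕ → ℕ)
    (hfin : ∀ i, (Set.range (col i)).Finite)
    (H : ∀ a : ℕ, ∀ A : Set ℕ, A.Infinite → (∀ b ∈ A, a < b) →
      ∃ B ⊆ A, B.Infinite ∧ ∀ i, i + 1 < k → ∀ S T : Finset ℕ,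
        ↑S ⊆ B → ↑T ⊆ B → S.card = i + 1 → T.card = i + 1 →
        col (i + 1) (insert a S) = col (i + 1) (insert a T)) :
    ∃ a : ℕ → ℕ, StrictMono a ∧ ∃ C : ℕ → ℕ, ∃ X : Set ℕ,
      X ⊆ Set.range a ∧ X.Infinite ∧
      ∀ i < k, ∀ S : Finset ℕ, ↑S ⊆ X → S.card = i + 1 → col i S = C i := by
  classical
  -- the invariant carried along the construction
  set G : ℕ × Set ℕ → Prop := fun p =>
    p.2.Infinite ∧ (∀ b ∈ p.2, p.1 < b) ∧
    (∀ i, i + 1 < k → ∀ S T : Finset ℕ,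
      ↑S ⊆ p.2 → ↑T ⊆ p.2 → S.card = i + 1 → T.card = i + 1 →
      col (i + 1) (insert p.1 S) = col (i + 1) (insert p.1 T)) with hG
  have key : ∀ a₀ : ℕ, ∀ A : Set ℕ, A.Infinite → (∀ b ∈ A, a₀ < b) →
      ∃ q : ℕ × Set ℕ, G q ∧ q.1 ∈ A ∧ q.2 ⊆ A := by
    intro a₀ A hA hlb
    obtain ⟨a', ha'⟩ := hA.nonempty
    have hA' : (A ∩ Set.Ioi a').Infinite := by
      have : A \ Set.Iic a' = A ∩ Set.Ioi a' := by
        ext x; simp [Set.mem_diff, Set.mem_Ioi, not_le]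
      rw [← this]
      exact hA.diff (Set.finite_Iic a')
    obtain ⟨B, hBsub, hBinf, hBhom⟩ := H a' (A ∩ Set.Ioi a') hA' (fun b hb => hb.2)
    exact ⟨(a', B), ⟨hBinf, fun b hb => (hBsub hb).2, hBhom⟩, ha',
      fun x hx => (hBsub hx).1⟩
  have key2 : ∀ s : {p : ℕ × Set ℕ // G p},
      ∃ t : {p : ℕ × Set ℕ // G p}, t.1.1 ∈ s.1.2 ∧ t.1.2 ⊆ s.1.2 := by
    intro s
    obtain ⟨q, hq, hq1, hq2⟩ := key s.1.1 s.1.2 s.2.1 s.2.2.1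
    exact ⟨⟨q, hq⟩, hq1, hq2⟩
  choose stp hstp1 hstp2 using key2
  obtain ⟨q0, hq0, -, -⟩ := key 0 (Set.Ioi 0) (Set.Ioi_infinite 0) (fun b hb => hb)
  set seq : ℕ → {p : ℕ × Set ℕ // G p} := fun n => stp^[n] ⟨q0, hq0⟩ with hseq
  have hseqsucc : ∀ n, seq (n + 1) = stp (seq n) := fun n =>
    Function.iterate_succ_apply' stp n _
  set a : ℕ → ℕ := fun n => (seq n).1.1 with ha
  set B : ℕ → Set ℕ := fun n => (seq n).1.2 with hB
  have hGn : ∀ n, G (seq n).1 := fun n => (seq n).2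
  have haS : ∀ n, a (n + 1) ∈ B n := by
    intro n; rw [ha, hB]; simp only; rw [hseqsucc]; exact hstp1 (seq n)
  have hBS : ∀ n, B (n + 1) ⊆ B n := by
    intro n; rw [hB]; simp only; rw [hseqsucc]; exact hstp2 (seq n)
  have hmono : StrictMono a := by
    apply strictMono_nat_of_lt_succ
    intro n
    exact (hGn n).2.1 _ (haS n)
  have hBanti : ∀ n m, n ≤ m → B m ⊆ B n := by
    intro n m hnm
    induction m with
    | zero => rw [Nat.le_zero.mp hnm]
    | succ m ih =>
      rcases Nat.lt_or_ge n (m + 1) with h | h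
      · exact Set.Subset.trans (hBS m) (ih (Nat.lt_succ_iff.mp h))
      · rw [Nat.le_antisymm hnm h]
  have hmem : ∀ n m, n < m → a m ∈ B n := by
    intro n m hnm
    cases m with
    | zero => omega
    | succ m' => exact hBanti n m' (by omega) (haS m')
  -- choose reference subsets for the color vector
  have hT : ∀ n j, ∃ t : Finset ℕ, ↑t ⊆ B n ∧ t.card = j := fun n j =>
    (hGn n).1.exists_subset_card_eq j
  choose T hT1 hT2 using hT
  set c : ℕ → ℕ → ℕ := fun n j => col j (insert (a n) (T n j)) with hc
  -- pigeonhole on color vectors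
  set R : Set (Fin k → ℕ) := Set.pi Set.univ fun i : Fin k => Set.range (col i) with hR
  have hRfin : R.Finite := Set.Finite.pi fun i => hfin i
  haveI : Finite R := hRfin.to_subtype
  set f : ℕ → R := fun n => ⟨fun i => c n i, fun i _ => ⟨insert (a n) (T n i), rfl⟩⟩ with hf
  obtain ⟨y, hy⟩ := Finite.exists_infinite_fiber f
  have hNinf : (f ⁻¹' {y}).Infinite := Set.infinite_coe_iff.mp hy
  refine ⟨a, hmono, fun i => if h : i < k then (y : Fin k → ℕ) ⟨i, h⟩ else 0,
    a '' (f ⁻¹' {y}), ?_, ?_, ?_⟩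
  · exact Set.image_subset_range a _
  · exact hNinf.image (Set.injOn_of_injective hmono.injective)
  · intro i hik S hS hcard
    have hne : S.Nonempty := Finset.card_pos.mp (by omega)
    set m := S.min' hne with hm
    have hmS : m ∈ S := S.min'_mem hne
    obtain ⟨n, hnN, hna⟩ := hS hmS
    have hcn : ∀ j (hj : j < k), c n j = (y : Fin k → ℕ) ⟨j, hj⟩ := by
      intro j hj
      have : f n = y := hnN
      have := congrFun (congrArg Subtype.val this) ⟨j, hj⟩
      exact this
    have hE : ↑(S.erase m) ⊆ B n := by
      intro x hx
      have hxS : x ∈ S := Finset.mem_of_mem_erase hx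
      have hxm : x ≠ m := Finset.ne_of_mem_erase hx
      obtain ⟨p, hpN, hpa⟩ := hS hxS
      have hmx : m < x := lt_of_le_of_ne (S.min'_le x hxS) (Ne.symm hxm)
      have hnp : n < p := by
        rw [← hna, ← hpa] at hmx
        exact hmono.lt_iff_lt.mp hmx
      rw [← hpa]
      exact hmem n p hnp
    have hEcard : (S.erase m).card = i := by
      rw [Finset.card_erase_of_mem hmS, hcard]; omega
    have hSins : insert (a n) (S.erase m) = S := by
      rw [hna]; exact Finset.insert_erase hmS
    have hgoal : col i S = c n i := by
      rcases i with _ | j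
      · -- i = 0 : S = {m}
        have hSm : S = {m} := by
          obtain ⟨x, hx⟩ := Finset.card_eq_one.mp hcard
          rw [hx] at hmS ⊢
          rw [Finset.mem_singleton.mp hmS]
        have hT0 : T n 0 = ∅ := Finset.card_eq_zero.mp (hT2 n 0)
        rw [hSm, hc]
        simp only [hT0, insert_empty_eq]
        rw [hna]
      · -- i = j + 1 : use homogeneity
        have := (hGn n).2.2 j hik (S.erase m) (T n (j + 1)) hE (hT1 n (j + 1))
          hEcard (hT2 n (j + 1))
        rw [hSins] at this
        exact this
    rw [hgoal, hcn i hik]; simp [hik]
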